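/- arXiv:2401.00313 — 4 statements merged into one kernel-verified Lean document; each statement's English description precedes it below -/
import Mathlib

section
/- Let G = (V,E) be a Δ-regular simple graph with the user-creator correspondence above (edges as users, vertices as creators, K = 1, ā = Δ, each happy user-creator pair having engagement ebar). Then for every stable set corresponding to an independent set S ⊆ V, the total engagement equals ebar · Δ · |S|. Consequently, the maximum total engagement over all stable sets is ebar · Δ · α(G), where α(G) is the independence number of G. -/
variable {V : Type*} [Fintype V] [DecidableEq V]

/-- A stable set with `K = 1`: a set `S` of creators (vertices) together with an
assignment `f` of users (edges) to incident creators in `S`, such that every creator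
in `S` receives at least `abar` users. -/
def StableConfig (G : SimpleGraph V) [DecidableRel G.Adj] (abar : ℕ)
    (S : Finset V) (f : Sym2 V → Option V) : Prop :=
  (∀ (e : Sym2 V) (v : V), f e = some v → e ∈ G.edgeFinset ∧ v ∈ e ∧ v ∈ S) ∧
  (∀ v ∈ S, abar ≤ (G.edgeFinset.filter (fun e => f e = some v)).card)

/-- Total engagement: each assigned user-creator pair contributes `ebar`. -/
def engagementOf (G : SimpleGraph V) [DecidableRel G.Adj] (ebar : ℝ)
    (f : Sym2 V → Option V) : ℝ :=
  ebar * ((G.edgeFinset.filter (fun e => (f e).isSome = true)).card : ℝ)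

/-- The independence number `α(G)`. -/
noncomputable def indepNum (G : SimpleGraph V) : ℕ :=
  sSup {n : ℕ | ∃ S : Finset V, (∀ u ∈ S, ∀ w ∈ S, ¬ G.Adj u w) ∧ S.card = n}

lemma assigned_eq_incidence (G : SimpleGraph V) [DecidableRel G.Adj] (Δ : ℕ)
    (hreg : G.IsRegularOfDegree Δ) {S : Finset V} {f : Sym2 V → Option V}
    (h : StableConfig G Δ S f) {v : V} (hv : v ∈ S) :
    G.edgeFinset.filter (fun e => f e = some v) = G.incidenceFinset v := by
  apply Finset.eq_of_subset_of_card_le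
  · intro e he
    simp only [Finset.mem_filter] at he
    obtain ⟨h1, h2, _⟩ := h.1 e v he.2
    rw [SimpleGraph.mem_incidenceFinset]
    exact ⟨SimpleGraph.mem_edgeFinset.mp h1, h2⟩
  · rw [G.card_incidenceFinset_eq_degree, hreg v]
    exact h.2 v hv

lemma stable_indep (G : SimpleGraph V) [DecidableRel G.Adj] (Δ : ℕ)
    (hreg : G.IsRegularOfDegree Δ) {S : Finset V} {f : Sym2 V → Option V}
    (h : StableConfig G Δ S f) : ∀ u ∈ S, ∀ w ∈ S, ¬ G.Adj u w := by
  intro u hu w hw hadj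
  have h1 := assigned_eq_incidence G Δ hreg h hu
  have h2 := assigned_eq_incidence G Δ hreg h hw
  have he1 : s(u, w) ∈ G.incidenceFinset u := by
    rw [SimpleGraph.mem_incidenceFinset]
    exact ⟨hadj, Sym2.mem_mk_left u w⟩
  have he2 : s(u, w) ∈ G.incidenceFinset w := by
    rw [SimpleGraph.mem_incidenceFinset]
    exact ⟨hadj, Sym2.mem_mk_right u w⟩
  rw [← h1, Finset.mem_filter] at he1
  rw [← h2, Finset.mem_filter] at he2
  have := he1.2.symm.trans he2.2
  exact hadj.ne (Option.some_injective _ this)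

lemma stable_engagement (G : SimpleGraph V) [DecidableRel G.Adj] (Δ : ℕ)
    (hreg : G.IsRegularOfDegree Δ) (ebar : ℝ) {S : Finset V} {f : Sym2 V → Option V}
    (h : StableConfig G Δ S f) : engagementOf G ebar f = ebar * Δ * S.card := by
  have key : G.edgeFinset.filter (fun e => (f e).isSome = true)
      = S.biUnion (fun v => G.edgeFinset.filter (fun e => f e = some v)) := by
    ext e
    simp only [Finset.mem_biUnion, Finset.mem_filter, Option.isSome_iff_exists]
    constructor
    · rintro ⟨he, v, hv⟩
      exact ⟨v, (h.1 e v hv).2.2, he, hv⟩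
    · rintro ⟨v, _, he, hv⟩
      exact ⟨he, v, hv⟩
  have hdisj : ∀ u ∈ S, ∀ w ∈ S, u ≠ w →
      Disjoint (G.edgeFinset.filter (fun e => f e = some u))
        (G.edgeFinset.filter (fun e => f e = some w)) := by
    intro u _ w _ huw
    rw [Finset.disjoint_left]
    intro e he1 he2
    rw [Finset.mem_filter] at he1 he2
    exact huw (Option.some_injective _ (he1.2.symm.trans he2.2))
  rw [engagementOf, key, Finset.card_biUnion hdisj]
  have : ∀ v ∈ S, (G.edgeFinset.filter (fun e => f e = some v)).card = Δ := by
    intro v hv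
    rw [assigned_eq_incidence G Δ hreg h hv, G.card_incidenceFinset_eq_degree, hreg v]
  rw [Finset.sum_congr rfl this, Finset.sum_const, smul_eq_mul]
  push_cast
  ring

/-- In the reduction from a `Δ`-regular graph (edges as users, vertices as creators,
`K = 1`, `ā = Δ`, every happy pair having engagement `ebar`): every stable set with
creator set `S` has total engagement `ebar · Δ · |S|`, and the maximum total engagement
over all stable sets equals `ebar · Δ · α(G)`. -/
theorem stmt4 (G : SimpleGraph V) [DecidableRel G.Adj] (Δ : ℕ) (hΔ : 0 < Δ)
    (hreg : G.IsRegularOfDegree Δ) (ebar : ℝ) (hebar : 0 ≤ ebar) :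
    (∀ (S : Finset V) (f : Sym2 V → Option V), StableConfig G Δ S f →
        engagementOf G ebar f = ebar * Δ * S.card) ∧
    IsGreatest {E : ℝ | ∃ (S : Finset V) (f : Sym2 V → Option V),
        StableConfig G Δ S f ∧ engagementOf G ebar f = E}
      (ebar * Δ * (indepNum G)) := by
  classical
  have bdd : BddAbove {n : ℕ | ∃ S : Finset V, (∀ u ∈ S, ∀ w ∈ S, ¬ G.Adj u w) ∧ S.card = n} := by
    refine ⟨Fintype.card V, ?_⟩
    rintro n ⟨S, -, rfl⟩
    exact S.card_le_univ.trans_eq (by simp)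
  have hne : {n : ℕ | ∃ S : Finset V, (∀ u ∈ S, ∀ w ∈ S, ¬ G.Adj u w) ∧ S.card = n}.Nonempty :=
    ⟨0, ∅, by simp⟩
  obtain ⟨S₀, hS₀indep, hS₀card⟩ := Nat.sSup_mem hne bdd
  refine ⟨fun S f h => stable_engagement G Δ hreg ebar h, ?_, ?_⟩
  · -- membership: construct a stable config on a maximum independent set
    set f : Sym2 V → Option V := fun e =>
      if h : e ∈ G.edgeFinset ∧ ∃ v, v ∈ S₀ ∧ v ∈ e then some h.2.choose else none with hf
    have hstable : StableConfig G Δ S₀ f := by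
      constructor
      · intro e v hev
        simp only [hf] at hev
        split_ifs at hev with h
        · obtain ⟨hv1, hv2⟩ := h.2.choose_spec
          cases hev
          exact ⟨h.1, hv2, hv1⟩
      · intro v hv
        have hsub : G.incidenceFinset v ⊆ G.edgeFinset.filter (fun e => f e = some v) := by
          intro e he
          rw [SimpleGraph.mem_incidenceFinset] at he
          obtain ⟨hadj, hve⟩ := he
          have hE : e ∈ G.edgeFinset := SimpleGraph.mem_edgeFinset.mpr hadj
          have hcond : e ∈ G.edgeFinset ∧ ∃ w, w ∈ S₀ ∧ w ∈ e := ⟨hE, v, hv, hve⟩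
          rw [Finset.mem_filter]
          refine ⟨hE, ?_⟩
          simp only [hf, dif_pos hcond]
          congr 1
          obtain ⟨hw1, hw2⟩ := hcond.2.choose_spec
          by_contra hne'
          have : e = s(hcond.2.choose, v) := ((Sym2.mem_and_mem_iff hne').mp ⟨hw2, hve⟩)
          rw [this, SimpleGraph.mem_edgeSet] at hadj
          exact hS₀indep _ hw1 _ hv hadj
        calc Δ = (G.incidenceFinset v).card := by
                rw [G.card_incidenceFinset_eq_degree, hreg v]
          _ ≤ _ := Finset.card_le_card hsub
    refine ⟨S₀, f, hstable, ?_⟩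
    rw [stable_engagement G Δ hreg ebar hstable, hS₀card]
    rfl
  · rintro E ⟨S, f, hst, rfl⟩
    rw [stable_engagement G Δ hreg ebar hst]
    have hle : S.card ≤ indepNum G :=
      le_csSup bdd ⟨S, stable_indep G Δ hreg hst, rfl⟩
    have : (S.card : ℝ) ≤ (indepNum G : ℝ) := Nat.cast_le.mpr hle
    have hnn : 0 ≤ ebar * Δ := mul_nonneg hebar (Nat.cast_nonneg _)
    exact mul_le_mul_of_nonneg_left this hnn
end

section
/- Consider C creators at positions X₁ ≤ ⋯ ≤ X_C on [0,1] (angular coordinates) with K < C, and a user at position y ∈ [0,1] assigned to the K creators nearest to y. Define regions R₁ = [0, (X₁+X_{K+1})/2], R_i = ((X_{i−1}+X_{i+K−1})/2, (X_i+X_{i+K})/2] for 2 ≤ i ≤ C−K, and R_{C−K+1} = ((X_{C−K}+X_C)/2, 1]. Then the user is assigned exactly to creators {i, i+1, …, i+K−1} if and only if y ∈ R_i. -/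
private lemma closer_larger {a b y : ℝ} (hab : a < b) (h : a + b ≤ 2*y) :
    |y - b| ≤ |y - a| := by
  rw [← Real.sqrt_sq_eq_abs, ← Real.sqrt_sq_eq_abs]
  apply Real.sqrt_le_sqrt
  nlinarith

private lemma closer_smaller {a b y : ℝ} (hab : a < b) (h : 2*y ≤ a + b) :
    |y - a| ≤ |y - b| := by
  rw [← Real.sqrt_sq_eq_abs, ← Real.sqrt_sq_eq_abs]
  apply Real.sqrt_le_sqrt
  nlinarith

private lemma mid_lt {a b y : ℝ} (hab : a < b) (h : |y - b| < |y - a|) :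
    a + b < 2*y := by
  by_contra hc
  exact absurd (closer_smaller hab (not_lt.mp hc)) (not_le.mpr h)

private lemma lt_mid {a b y : ℝ} (hab : a < b) (h : |y - a| < |y - b|) :
    2*y < a + b := by
  by_contra hc
  exact absurd (closer_larger hab (not_lt.mp hc)) (not_le.mpr h)

/-- Region decomposition for the user-centric algorithm in `D = 2` (angular coordinates):
with creators at sorted positions `X₁ < ⋯ < X_C` in `[0,1]` and a user at `y ∈ [0,1]`
assigned to the `K` strictly nearest creators `A`, we have `A = {i, …, i+K-1}` iff
`y` lies in the region `R_i` (with midpoint boundaries). -/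
theorem stmt11 (C K : ℕ) (hK : 0 < K) (hKC : K < C) (X : ℕ → ℝ)
    (hmono : ∀ i j : ℕ, 1 ≤ i → i < j → j ≤ C → X i < X j)
    (hrange : ∀ i : ℕ, 1 ≤ i → i ≤ C → X i ∈ Set.Icc (0 : ℝ) 1)
    (y : ℝ) (hy : y ∈ Set.Icc (0 : ℝ) 1)
    (A : Finset ℕ) (hA : A ⊆ Finset.Icc 1 C) (hAcard : A.card = K)
    (hnear : ∀ a ∈ A, ∀ b ∈ Finset.Icc 1 C, b ∉ A → |y - X a| < |y - X b|)
    (i : ℕ) (hi : 1 ≤ i) (hi' : i ≤ C - K + 1) :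
    A = Finset.Icc i (i + K - 1) ↔
      ((1 < i → (X (i - 1) + X (i + K - 1)) / 2 < y) ∧
       (i ≤ C - K → y ≤ (X i + X (i + K)) / 2)) := by
  have hKC' : K ≤ C := hKC.le
  have hiK : i + K - 1 ≤ C := by omega
  have hmono' : ∀ a b : ℕ, 1 ≤ a → a ≤ b → b ≤ C → X a ≤ X b := by
    intro a b h1 h2 h3
    rcases eq_or_lt_of_le h2 with h | h
    · rw [h]
    · exact (hmono a b h1 h h3).le
  constructor
  · intro hAeq
    constructor
    · intro h1i
      have hb : i - 1 ∈ Finset.Icc 1 C := by simp; omega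
      have hbA : i - 1 ∉ A := by rw [hAeq]; simp; omega
      have haA : i + K - 1 ∈ A := by rw [hAeq]; simp; omega
      have hlt := hnear _ haA _ hb hbA
      have hx : X (i - 1) < X (i + K - 1) := hmono _ _ (by omega) (by omega) (by omega)
      have := mid_lt hx hlt
      linarith
    · intro hiCK
      have hb : i + K ∈ Finset.Icc 1 C := by simp; omega
      have hbA : i + K ∉ A := by rw [hAeq]; simp; omega
      have haA : i ∈ A := by rw [hAeq]; simp; omega
      have hlt := hnear _ haA _ hb hbA
      have hx : X i < X (i + K) := hmono _ _ hi (by omega) (by omega)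
      have := lt_mid hx hlt
      linarith
  · rintro ⟨h1, h2⟩
    have hcard : (Finset.Icc i (i + K - 1)).card = K := by
      rw [Nat.card_Icc]; omega
    by_contra hne
    have hsub : ¬ A ⊆ Finset.Icc i (i + K - 1) := fun h =>
      hne (Finset.eq_of_subset_of_card_le h (by rw [hcard, hAcard]))
    obtain ⟨a, haA, haI⟩ := Finset.not_subset.mp hsub
    have hsub2 : ¬ Finset.Icc i (i + K - 1) ⊆ A := fun h =>
      hne ((Finset.eq_of_subset_of_card_le h (by rw [hcard, hAcard])).symm)
    obtain ⟨b, hbI, hbA⟩ := Finset.not_subset.mp hsub2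
    have haC := hA haA
    simp only [Finset.mem_Icc] at haC hbI haI
    have hbC : b ∈ Finset.Icc 1 C := by simp; omega
    have hlt := hnear a haA b hbC hbA
    rcases (by omega : a < i ∨ i + K ≤ a) with hcase | hcase
    · have hmid := h1 (by omega)
      have hXa : X a ≤ X (i - 1) := hmono' _ _ (by omega) (by omega) (by omega)
      have hXb : X b ≤ X (i + K - 1) := hmono' _ _ (by omega) (by omega) (by omega)
      have hXab : X a < X b := hmono a b (by omega) (by omega) (by omega)
      have := closer_larger (y := y) hXab (by linarith)
      linarith
    · have hmid := h2 (by omega)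
      have hXa : X (i + K) ≤ X a := hmono' _ _ (by omega) (by omega) (by omega)
      have hXb : X i ≤ X b := hmono' _ _ (by omega) (by omega) (by omega)
      have hXba : X b < X a := hmono b a (by omega) (by omega) (by omega)
      have := closer_smaller (y := y) hXba (by linarith)
      linarith
end

section
/- In the setting of the previous region decomposition with U = rC users, creator audience threshold ā = rK, and K > C/2, let U_i be the number of users in region R_i and a_j the audience of creator j, so a_j = U₁+⋯+U_j for j ≤ C−K, a_j = U for C−K+1 ≤ j ≤ K, and a_j = U_{j−K+1}+⋯+U_{C−K+1} for j ≥ K+1. Then: (1) the set of creators with a_j ≥ ā forms a contiguous interval {i, …, j} of indices; and (2) for any i ∈ [1, C−K], creators i and i+K cannot both satisfy their thresholds, hence at most K creators survive. -/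
/-- With `U = rC` users, threshold `ā = rK`, and `K > C/2`: letting `U_i` be the number
of users in region `R_i` and `a_j` the audience of creator `j` (prefix sums for
`j ≤ C-K`, all users for `C-K+1 ≤ j ≤ K`, suffix sums for `j ≥ K+1`), the set of
surviving creators (`a_j ≥ ā`) is a contiguous interval, creators `i` and `i+K` can
never both survive, and at most `K` creators survive. -/
theorem stmt12 (r C K : ℕ) (hr : 0 < r) (hKC : K < C) (h2K : C < 2 * K)
    (Un : ℕ → ℕ) (a : ℕ → ℕ)
    (hsum : ∑ i ∈ Finset.Icc 1 (C - K + 1), Un i = r * C)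
    (ha1 : ∀ j, 1 ≤ j → j ≤ C - K → a j = ∑ i ∈ Finset.Icc 1 j, Un i)
    (ha2 : ∀ j, C - K + 1 ≤ j → j ≤ K → a j = r * C)
    (ha3 : ∀ j, K + 1 ≤ j → j ≤ C →
      a j = ∑ i ∈ Finset.Icc (j - K + 1) (C - K + 1), Un i) :
    (∀ i j l : ℕ, 1 ≤ i → i ≤ j → j ≤ l → l ≤ C →
        r * K ≤ a i → r * K ≤ a l → r * K ≤ a j) ∧
    (∀ i : ℕ, 1 ≤ i → i ≤ C - K → ¬(r * K ≤ a i ∧ r * K ≤ a (i + K))) ∧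
    ((Finset.Icc 1 C).filter (fun j => r * K ≤ a j)).card ≤ K := by
  have hmono1 : ∀ i j, 1 ≤ i → i ≤ j → j ≤ C - K → a i ≤ a j := by
    intro i j hi hij hj
    rw [ha1 i hi (hij.trans hj), ha1 j (hi.trans hij) hj]
    exact Finset.sum_le_sum_of_subset (Finset.Icc_subset_Icc le_rfl hij)
  have hmono2 : ∀ j l, K + 1 ≤ j → j ≤ l → l ≤ C → a l ≤ a j := by
    intro j l hj hjl hl
    rw [ha3 j hj (hjl.trans hl), ha3 l (hj.trans hjl) hl]
    exact Finset.sum_le_sum_of_subset (Finset.Icc_subset_Icc (by omega) le_rfl)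
  have part1 : ∀ i j l : ℕ, 1 ≤ i → i ≤ j → j ≤ l → l ≤ C →
      r * K ≤ a i → r * K ≤ a l → r * K ≤ a j := by
    intro i j l hi hij hjl hl hai hal
    rcases le_or_gt j (C - K) with h | h
    · exact hai.trans (hmono1 i j hi hij h)
    · rcases le_or_gt j K with h2 | h2
      · rw [ha2 j (by omega) h2]
        exact Nat.mul_le_mul_left r hKC.le
      · exact hal.trans (hmono2 j l (by omega) hjl hl)
  have part2 : ∀ i : ℕ, 1 ≤ i → i ≤ C - K → ¬(r * K ≤ a i ∧ r * K ≤ a (i + K)) := by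
    rintro i hi hiC ⟨h1, h2⟩
    have hsplit : a i + a (i + K) = r * C := by
      rw [ha1 i hi hiC, ha3 (i + K) (by omega) (by omega), ← hsum]
      have e : i + K - K + 1 = i + 1 := by omega
      rw [e]
      rw [show (1:ℕ) = 0 + 1 from rfl, Finset.Icc_add_one_left_eq_Ioc, Finset.Icc_add_one_left_eq_Ioc,
          (show Finset.Icc (i + (0+1)) (C - K + (0+1)) = Finset.Ioc i (C - K + (0+1)) from
            Finset.Icc_add_one_left_eq_Ioc (a := i) (b := C - K + (0+1)))]
      exact Finset.sum_Ioc_consecutive Un (Nat.zero_le i) (by omega)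
    have hle : r * (K + K) ≤ r * C := by
      calc r * (K + K) = r * K + r * K := by ring
        _ ≤ a i + a (i + K) := Nat.add_le_add h1 h2
        _ = r * C := hsplit
    have := Nat.le_of_mul_le_mul_left hle hr
    omega
  refine ⟨part1, part2, ?_⟩
  refine le_trans (Finset.card_le_card_of_injOn
    (t := Finset.Icc 1 K) (fun j => if j ≤ K then j else j - K) ?_ ?_) (by simp)
  · intro j hj
    simp only [Finset.mem_coe, Finset.mem_filter, Finset.mem_Icc] at hj
    by_cases h : j ≤ K <;> simp [h, Finset.mem_Icc] <;> omega
  · intro j1 hj1 j2 hj2 heq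
    simp only [Finset.mem_coe, Finset.mem_filter, Finset.mem_Icc] at hj1 hj2
    by_cases h1 : j1 ≤ K <;> by_cases h2 : j2 ≤ K <;> simp [h1, h2] at heq
    · omega
    · -- j1 ≤ K < j2, j1 = j2 - K
      exfalso
      refine part2 j1 hj1.1.1 (by omega) ⟨hj1.2, ?_⟩
      have : j1 + K = j2 := by omega
      rw [this]; exact hj2.2
    · exfalso
      refine part2 j2 hj2.1.1 (by omega) ⟨hj2.2, ?_⟩
      have : j2 + K = j1 := by omega
      rw [this]; exact hj1.2
    · omega
end

section
/- Let d ∈ (0, 2] and consider finitely many points (users) in the type space S = {x ∈ R^D_{≥0} : ‖x‖ = 1}, together with a matching in which some users are 'assigned'. Suppose every assigned group lies within a common neighborhood ball of effective diameter d, every ball centered at a representative (assigned) user contains at least ā users and all of them are assigned, and every ball centered at an unassigned user contains at most ā−1 unassigned users. If every user lies in a large ball (radius d) around some representative, and each ring (large ball minus neighborhood ball) contains at most M(ā−1) unassigned users, then the fraction of assigned users is at least ā / (ā + M(ā−1)) ≥ 1/(1+M). -/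
/-- Counting argument for the Local Clustering algorithm: if every user lies in a large
ball of some representative, assigned users are partitioned into disjoint neighborhood
balls each containing at least `ā` (assigned) users, and each ring (large ball minus
neighborhood ball) contains at most `M(ā-1)` unassigned users, then the fraction of
assigned users is at least `ā / (ā + M(ā-1)) ≥ 1/(1+M)`. -/
theorem stmt15 {α ι : Type*} [DecidableEq α] (Users Assigned : Finset α)
    (Reps : Finset ι) (NB LB : ι → Finset α) (abar M : ℕ)
    (hAU : Assigned ⊆ Users)
    (hNBLB : ∀ k ∈ Reps, NB k ⊆ LB k)
    (hLBU : ∀ k ∈ Reps, LB k ⊆ Users)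
    (hcover : ∀ u ∈ Users, ∃ k ∈ Reps, u ∈ LB k)
    (hNBassigned : ∀ k ∈ Reps, NB k ⊆ Assigned)
    (hNBdisj : ∀ k ∈ Reps, ∀ l ∈ Reps, k ≠ l → Disjoint (NB k) (NB l))
    (hNBcard : ∀ k ∈ Reps, abar ≤ (NB k).card)
    (hAssignedUnion : ∀ u ∈ Assigned, ∃ k ∈ Reps, u ∈ NB k)
    (hring : ∀ k ∈ Reps,
      (((LB k \ NB k) ∩ (Users \ Assigned))).card ≤ M * (abar - 1)) :
    Users.card * abar ≤ Assigned.card * (abar + M * (abar - 1)) ∧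
    Users.card ≤ Assigned.card * (1 + M) := by
  have hU : Users.card ≤ Assigned.card + Reps.card * (M * (abar - 1)) := by
    have hAUc : Assigned.card ≤ Users.card := Finset.card_le_card hAU
    have hsd : (Users \ Assigned).card = Users.card - Assigned.card :=
      Finset.card_sdiff_of_subset hAU
    have hsub : Users \ Assigned ⊆
        Reps.biUnion (fun k => (LB k \ NB k) ∩ (Users \ Assigned)) := by
      intro u hu
      obtain ⟨huU, huA⟩ := Finset.mem_sdiff.mp hu
      obtain ⟨k, hk, hkLB⟩ := hcover u huU
      exact Finset.mem_biUnion.mpr ⟨k, hk, Finset.mem_inter.mpr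
        ⟨Finset.mem_sdiff.mpr ⟨hkLB, fun hn => huA (hNBassigned k hk hn)⟩, hu⟩⟩
    have h1 := Finset.card_le_card hsub
    have h2 := Finset.card_biUnion_le (s := Reps)
      (t := fun k => (LB k \ NB k) ∩ (Users \ Assigned))
    have h3 : ∑ k ∈ Reps, ((LB k \ NB k) ∩ (Users \ Assigned)).card
        ≤ Reps.card * (M * (abar - 1)) := by
      calc ∑ k ∈ Reps, ((LB k \ NB k) ∩ (Users \ Assigned)).card
          ≤ ∑ _k ∈ Reps, M * (abar - 1) := Finset.sum_le_sum fun k hk => hring k hk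
        _ = Reps.card * (M * (abar - 1)) := by rw [Finset.sum_const, smul_eq_mul]
    omega
  have hA : Reps.card * abar ≤ Assigned.card := by
    have hsub : Reps.biUnion NB ⊆ Assigned := Finset.biUnion_subset.mpr hNBassigned
    have hc := Finset.card_biUnion hNBdisj
    have h5 : ∑ k ∈ Reps, (NB k).card ≤ Assigned.card :=
      hc ▸ Finset.card_le_card hsub
    have h4 : Reps.card * abar ≤ ∑ k ∈ Reps, (NB k).card := by
      calc Reps.card * abar = ∑ _k ∈ Reps, abar := by
            rw [Finset.sum_const, smul_eq_mul]
        _ ≤ ∑ k ∈ Reps, (NB k).card := Finset.sum_le_sum hNBcard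
    omega
  have hmono : abar - 1 ≤ abar := Nat.sub_le _ _
  constructor
  · nlinarith [Nat.mul_le_mul_right abar hU, Nat.mul_le_mul_right (M * (abar - 1)) hA]
  · nlinarith [hU, Nat.mul_le_mul_left M hA,
      Nat.mul_le_mul_left (Reps.card * M) hmono]
end
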